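/- Let 𝒜 be a linear subspace of continuous functions on a topological space Ω containing the constants, S ⊆ Ω, and K = {a* ∈ 𝒜* : a*(1) = 1, a*(a) ≥ 0 for all a ∈ 𝒜 non-negative on S}. Let a* ∈ K. Then b* ∈ K belongs to the Gleason part of a* in K (i.e., a* and b* lie on a common open line segment contained in K) if and only if there exist constants C > c > 0 such that c·a*(a) ≤ b*(a) ≤ C·a*(a) for every a ∈ 𝒜 that is non-negative on S. -/

import Mathlib

/-- The Gleason relation on a convex set `K`: two points are related if some open line
segment contained in `K` contains both of them. -/
def gleasonRel {V : Type*} [AddCommGroup V] [Module ℝ V] (K : Set V) (k₁ k₂ : V) : Prop :=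
  ∃ l₁ l₂ : V, openSegment ℝ l₁ l₂ ⊆ K ∧ k₁ ∈ openSegment ℝ l₁ l₂ ∧ k₂ ∈ openSegment ℝ l₁ l₂

private lemma harnack_key (p q x y s t : ℝ) (hp : 0 ≤ p) (hq : 0 ≤ q)
    (hs0 : 0 < s) (hs1 : s < 1) (ht0 : 0 < t) (ht1 : t < 1)
    (hx : x = (1 - s) * p + s * q) (hy : y = (1 - t) * p + t * q) :
    min (t / s) ((1 - t) / (1 - s)) * x ≤ y ∧ y ≤ max (t / s) ((1 - t) / (1 - s)) * x := by
  have hs : s ≠ 0 := ne_of_gt hs0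
  have hs1' : (1 : ℝ) - s ≠ 0 := by linarith
  have e1 : t / s * (s * q) = t * q := by field_simp
  have e2 : (1 - t) / (1 - s) * ((1 - s) * p) = (1 - t) * p := by field_simp
  have hsp : 0 ≤ (1 - s) * p := by nlinarith
  have hsq : 0 ≤ s * q := by nlinarith
  constructor
  · have h1 : min (t / s) ((1 - t) / (1 - s)) * ((1 - s) * p) ≤ (1 - t) * p := by
      calc min (t / s) ((1 - t) / (1 - s)) * ((1 - s) * p)
          ≤ (1 - t) / (1 - s) * ((1 - s) * p) :=
            mul_le_mul_of_nonneg_right (min_le_right _ _) hsp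
        _ = (1 - t) * p := e2
    have h2 : min (t / s) ((1 - t) / (1 - s)) * (s * q) ≤ t * q := by
      calc min (t / s) ((1 - t) / (1 - s)) * (s * q)
          ≤ t / s * (s * q) := mul_le_mul_of_nonneg_right (min_le_left _ _) hsq
        _ = t * q := e1
    have hxe : min (t / s) ((1 - t) / (1 - s)) * x
        = min (t / s) ((1 - t) / (1 - s)) * ((1 - s) * p)
          + min (t / s) ((1 - t) / (1 - s)) * (s * q) := by rw [hx]; ring
    linarith [hxe]
  · have h1 : (1 - t) * p ≤ max (t / s) ((1 - t) / (1 - s)) * ((1 - s) * p) := by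
      calc (1 - t) * p = (1 - t) / (1 - s) * ((1 - s) * p) := e2.symm
        _ ≤ max (t / s) ((1 - t) / (1 - s)) * ((1 - s) * p) :=
            mul_le_mul_of_nonneg_right (le_max_right _ _) hsp
    have h2 : t * q ≤ max (t / s) ((1 - t) / (1 - s)) * (s * q) := by
      calc t * q = t / s * (s * q) := e1.symm
        _ ≤ max (t / s) ((1 - t) / (1 - s)) * (s * q) :=
            mul_le_mul_of_nonneg_right (le_max_left _ _) hsq
    have hxe : max (t / s) ((1 - t) / (1 - s)) * x
        = max (t / s) ((1 - t) / (1 - s)) * ((1 - s) * p)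
          + max (t / s) ((1 - t) / (1 - s)) * (s * q) := by rw [hx]; ring
    linarith [hxe]

private lemma nonneg_of_forall_openInterval (p q : ℝ)
    (h : ∀ u : ℝ, 0 < u → u < 1 → 0 ≤ (1 - u) * p + u * q) : 0 ≤ p := by
  have ht : Filter.Tendsto (fun u : ℝ => (1 - u) * p + u * q) (nhdsWithin 0 (Set.Ioi 0))
      (nhds p) := by
    have hc : Continuous (fun u : ℝ => (1 - u) * p + u * q) := by continuity
    have h2 := hc.tendsto 0
    simp only [sub_zero, one_mul, zero_mul, add_zero] at h2
    exact h2.mono_left nhdsWithin_le_nhds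
  refine ge_of_tendsto ht ?_
  filter_upwards [Ioo_mem_nhdsGT_of_mem (by norm_num : (0 : ℝ) ∈ Set.Ico 0 1)] with u hu
  exact h u hu.1 hu.2

set_option maxHeartbeats 1000000 in
/-- Harnack-inequality characterisation of Gleason parts.  Let `A` be a normed space of
functions on `Ω` (via the interpretation map `δ`) containing the constant function `one`,
let `S ⊆ Ω`, and let `K ⊆ A*` be the set of functionals normalised at `one` and
non-negative on functions non-negative on `S`.  Then `ψ ∈ K` lies in the Gleason part of
`φ ∈ K` if and only if a two-sided Harnack inequality `c·φ(a) ≤ ψ(a) ≤ C·φ(a)` holds for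
all `a` non-negative on `S`, for some constants `C > c > 0`. -/
theorem gleasonPart_iff_harnack {Ω A : Type*} [NormedAddCommGroup A] [NormedSpace ℝ A]
    (δ : A →ₗ[ℝ] (Ω → ℝ)) (one : A) (hone : δ one = fun _ => (1 : ℝ)) (S : Set Ω)
    (K : Set (A →L[ℝ] ℝ))
    (hK : K = {χ : A →L[ℝ] ℝ | χ one = 1 ∧ ∀ a : A, (∀ s ∈ S, 0 ≤ δ a s) → 0 ≤ χ a})
    (φ ψ : A →L[ℝ] ℝ) (hφ : φ ∈ K) (hψ : ψ ∈ K) :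
    gleasonRel K φ ψ ↔
      ∃ c C : ℝ, 0 < c ∧ c < C ∧
        ∀ a : A, (∀ s ∈ S, 0 ≤ δ a s) → c * φ a ≤ ψ a ∧ ψ a ≤ C * φ a := by
  subst hK
  obtain ⟨hφ1, hφ2⟩ := hφ
  obtain ⟨hψ1, hψ2⟩ := hψ
  constructor
  · rintro ⟨l₁, l₂, hsub, hφm, hψm⟩
    obtain ⟨a₁, b₁, ha₁, hb₁, hab₁, hφeq⟩ := hφm
    obtain ⟨a₂, b₂, ha₂, hb₂, hab₂, hψeq⟩ := hψm
    have hP : ∀ u : ℝ, 0 < u → u < 1 →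
        ((1 - u) • l₁ + u • l₂) ∈ {χ : A →L[ℝ] ℝ |
          χ one = 1 ∧ ∀ a : A, (∀ s ∈ S, 0 ≤ δ a s) → 0 ≤ χ a} := by
      intro u hu0 hu1
      exact hsub ⟨1 - u, u, by linarith, hu0, by ring, rfl⟩
    have hl₁ : ∀ p : A, (∀ s ∈ S, 0 ≤ δ p s) → 0 ≤ l₁ p := by
      intro p hp
      apply nonneg_of_forall_openInterval (l₁ p) (l₂ p)
      intro u hu0 hu1
      have := (hP u hu0 hu1).2 p hp
      simpa using this
    have hl₂ : ∀ p : A, (∀ s ∈ S, 0 ≤ δ p s) → 0 ≤ l₂ p := by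
      intro p hp
      apply nonneg_of_forall_openInterval (l₂ p) (l₁ p)
      intro u hu0 hu1
      have := (hP (1 - u) (by linarith) (by linarith)).2 p hp
      simp only [ContinuousLinearMap.add_apply, ContinuousLinearMap.coe_smul',
        Pi.smul_apply, smul_eq_mul] at this ⊢
      linarith
    set m := min (b₂ / b₁) ((1 - b₂) / (1 - b₁)) with hm
    set M := max (b₂ / b₁) ((1 - b₂) / (1 - b₁)) with hM
    have hb₁1 : b₁ < 1 := by linarith
    have hb₂1 : b₂ < 1 := by linarith
    have hm0 : 0 < m :=
      lt_min (div_pos hb₂ hb₁) (div_pos (by linarith) (by linarith))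
    have hmM : m ≤ M := min_le_max
    refine ⟨m / 2, M + 1, by linarith, by linarith, ?_⟩
    intro p hp
    have hφp : φ p = (1 - b₁) * l₁ p + b₁ * l₂ p := by
      have := congrArg (fun χ : A →L[ℝ] ℝ => χ p) hφeq
      simp only [ContinuousLinearMap.add_apply, ContinuousLinearMap.coe_smul',
        Pi.smul_apply, smul_eq_mul] at this
      rw [← this]; have : a₁ = 1 - b₁ := by linarith
      rw [this]
    have hψp : ψ p = (1 - b₂) * l₁ p + b₂ * l₂ p := by
      have := congrArg (fun χ : A →L[ℝ] ℝ => χ p) hψeq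
      simp only [ContinuousLinearMap.add_apply, ContinuousLinearMap.coe_smul',
        Pi.smul_apply, smul_eq_mul] at this
      rw [← this]; have : a₂ = 1 - b₂ := by linarith
      rw [this]
    obtain ⟨hlow, hhigh⟩ := harnack_key (l₁ p) (l₂ p) (φ p) (ψ p) b₁ b₂
      (hl₁ p hp) (hl₂ p hp) hb₁ hb₁1 hb₂ hb₂1 hφp hψp
    have hφnn : 0 ≤ φ p := hφ2 p hp
    constructor
    · have : m / 2 * φ p ≤ m * φ p :=
        mul_le_mul_of_nonneg_right (by linarith) hφnn
      linarith
    · have : M * φ p ≤ (M + 1) * φ p :=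
        mul_le_mul_of_nonneg_right (by linarith) hφnn
      linarith
  · rintro ⟨c, C, hc, hcC, hball⟩
    set c' := min c (1 / 2) with hc'
    set C' := max C 2 with hC'
    have hc'0 : 0 < c' := lt_min hc (by norm_num)
    have hc'1 : c' < 1 := lt_of_le_of_lt (min_le_right _ _) (by norm_num)
    have hC'1 : 1 < C' := lt_of_lt_of_le one_lt_two (le_max_right _ _)
    have hbound : ∀ p, (∀ s ∈ S, 0 ≤ δ p s) → c' * φ p ≤ ψ p ∧ ψ p ≤ C' * φ p := by
      intro p hp
      obtain ⟨h1, h2⟩ := hball p hp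
      have hφp : 0 ≤ φ p := hφ2 p hp
      constructor
      · calc c' * φ p ≤ c * φ p := mul_le_mul_of_nonneg_right (min_le_left _ _) hφp
          _ ≤ ψ p := h1
      · calc ψ p ≤ C * φ p := h2
          _ ≤ C' * φ p := mul_le_mul_of_nonneg_right (le_max_left _ _) hφp
    set t₀ : ℝ := -(1 / (C' - 1)) with ht₀def
    set t₁ : ℝ := 1 / (1 - c') with ht₁def
    have hC1 : (0 : ℝ) < C' - 1 := by linarith
    have hc1 : (0 : ℝ) < 1 - c' := by linarith
    have ht₀ : t₀ < 0 := by
      rw [ht₀def]; simp only [neg_lt, neg_zero]; positivity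
    have ht₁ : 1 < t₁ := by
      rw [ht₁def]; rw [lt_div_iff₀ hc1]; linarith
    have ht₀C : t₀ * (C' - 1) = -1 := by
      rw [ht₀def]; field_simp
    have ht₁c : t₁ * (1 - c') = 1 := by
      rw [ht₁def]; field_simp
    have hd : 0 < t₁ - t₀ := by linarith
    refine ⟨(1 - t₀) • φ + t₀ • ψ, (1 - t₁) • φ + t₁ • ψ, ?_, ?_, ?_⟩
    · rintro x ⟨a, b, ha, hb, hab, rfl⟩
      set u := a * t₀ + b * t₁ with hu
      have hx : ∀ p : A, (a • ((1 - t₀) • φ + t₀ • ψ) + b • ((1 - t₁) • φ + t₁ • ψ)) p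
          = (1 - u) * φ p + u * ψ p := by
        intro p
        simp only [ContinuousLinearMap.add_apply, ContinuousLinearMap.coe_smul',
          Pi.smul_apply, smul_eq_mul, hu]
        linear_combination (φ p) * hab
      have hu₀ : t₀ < u := by
        have he : u - t₀ = b * (t₁ - t₀) := by rw [hu]; linear_combination t₀ * hab
        nlinarith [mul_pos hb hd]
      have hu₁ : u < t₁ := by
        have he : t₁ - u = a * (t₁ - t₀) := by rw [hu]; linear_combination (-t₁) * hab
        nlinarith [mul_pos ha hd]
      constructor
      · rw [hx one, hφ1, hψ1]; ring
      · intro p hp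
        rw [hx p]
        obtain ⟨h1, h2⟩ := hbound p hp
        have hφp : 0 ≤ φ p := hφ2 p hp
        have hψp : 0 ≤ ψ p := hψ2 p hp
        rcases le_or_gt u 0 with hcase | hcase
        · have key : 0 ≤ 1 + u * (C' - 1) := by
            have h' := mul_lt_mul_of_pos_right hu₀ hC1
            rw [ht₀C] at h'; linarith
          nlinarith [mul_nonneg (neg_nonneg.mpr hcase) (by linarith : 0 ≤ C' * φ p - ψ p), mul_nonneg key hφp]
        · rcases le_or_gt u 1 with hcase2 | hcase2
          · have h1' : 0 ≤ (1 - u) * φ p := mul_nonneg (by linarith) hφp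
            have h2' : 0 ≤ u * ψ p := mul_nonneg (by linarith) hψp
            linarith
          · have key : 0 ≤ 1 - u * (1 - c') := by
              have h' := mul_lt_mul_of_pos_right hu₁ hc1
              rw [ht₁c] at h'; linarith
            nlinarith [mul_nonneg (le_of_lt hcase) (by linarith : 0 ≤ ψ p - c' * φ p), mul_nonneg key hφp]
    · refine ⟨t₁ / (t₁ - t₀), -t₀ / (t₁ - t₀), div_pos (by linarith) hd,
        div_pos (by linarith) hd, ?_, ?_⟩
      · field_simp; ring
      · have hsum : t₁ / (t₁ - t₀) + -t₀ / (t₁ - t₀) = 1 := by field_simp; ring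
        have hzero : t₁ / (t₁ - t₀) * t₀ + -t₀ / (t₁ - t₀) * t₁ = 0 := by
          field_simp; ring
        ext p
        simp only [ContinuousLinearMap.add_apply, ContinuousLinearMap.coe_smul',
          Pi.smul_apply, smul_eq_mul]
        linear_combination (φ p) * hsum + (ψ p - φ p) * hzero
    · refine ⟨(t₁ - 1) / (t₁ - t₀), (1 - t₀) / (t₁ - t₀), div_pos (by linarith) hd,
        div_pos (by linarith) hd, ?_, ?_⟩
      · field_simp; ring
      · have hsum : (t₁ - 1) / (t₁ - t₀) + (1 - t₀) / (t₁ - t₀) = 1 := by field_simp; ring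
        have hone' : (t₁ - 1) / (t₁ - t₀) * t₀ + (1 - t₀) / (t₁ - t₀) * t₁ = 1 := by
          field_simp; ring
        ext p
        simp only [ContinuousLinearMap.add_apply, ContinuousLinearMap.coe_smul',
          Pi.smul_apply, smul_eq_mul]
        linear_combination (φ p) * hsum + (ψ p - φ p) * hone'
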